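/- Let K be an algebraically closed field and R = K[x, y, z, a, b, c, d]. Let X be the (2×5)-matrix with rows (x², y², z², a, b) and (x³, y³, z³, c, d). Set u = (z² + (ad − bc))·d − z³·b and w = (y² + u)·d − y³·b + (z² + (ad − bc))·c − z³·a, and let X' be the (2×5)-matrix with rows (x² + w, y² + u, z² + (ad − bc), a, b) and (x³, y³, z³, c, d). Then √(I_2(X)) = √((g_1, g_2, g_3, g_4)), where g_1 is the 2×2 minor of X' on columns 1,2; g_2 is the 2×2 minor of X' on columns 1,3; g_3 is the sum of the 2×2 minors of X' on columns 1,4 and on columns 2,3; and g_4 is the sum of the 2×2 minors of X' on columns 1,5 and on columns 2,4. -/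

import Mathlib

/-- The ideal generated by the `t × t` minors of a matrix. -/
def minorsIdeal {R : Type*} [CommRing R] {m n : ℕ} (t : ℕ)
    (X : Matrix (Fin m) (Fin n) R) : Ideal R :=
  Ideal.span { d | ∃ (r : Fin t → Fin m) (c : Fin t → Fin n),
    Function.Injective r ∧ Function.Injective c ∧ d = (X.submatrix r c).det }

namespace Stmt15

variable (K : Type*) [Field K]

/-- The seven variables `x, y, z, a, b, c, d` of `K[x, y, z, a, b, c, d]`. -/
noncomputable def x : MvPolynomial (Fin 7) K := MvPolynomial.X 0
noncomputable def y : MvPolynomial (Fin 7) K := MvPolynomial.X 1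
noncomputable def z : MvPolynomial (Fin 7) K := MvPolynomial.X 2
noncomputable def a : MvPolynomial (Fin 7) K := MvPolynomial.X 3
noncomputable def b : MvPolynomial (Fin 7) K := MvPolynomial.X 4
noncomputable def c : MvPolynomial (Fin 7) K := MvPolynomial.X 5
noncomputable def d : MvPolynomial (Fin 7) K := MvPolynomial.X 6

/-- The matrix `X` with rows `(x², y², z², a, b)` and `(x³, y³, z³, c, d)`. -/
noncomputable def M : Matrix (Fin 2) (Fin 5) (MvPolynomial (Fin 7) K) :=
  !![x K ^ 2, y K ^ 2, z K ^ 2, a K, b K;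
     x K ^ 3, y K ^ 3, z K ^ 3, c K, d K]

/-- `u = (z² + (ad − bc))·d − z³·b`. -/
noncomputable def u : MvPolynomial (Fin 7) K :=
  (z K ^ 2 + (a K * d K - b K * c K)) * d K - z K ^ 3 * b K

/-- `w = (y² + u)·d − y³·b + (z² + (ad − bc))·c − z³·a`. -/
noncomputable def w : MvPolynomial (Fin 7) K :=
  (y K ^ 2 + u K) * d K - y K ^ 3 * b K
    + (z K ^ 2 + (a K * d K - b K * c K)) * c K - z K ^ 3 * a K

/-- The modified matrix `X'` with rows `(x² + w, y² + u, z² + (ad − bc), a, b)` and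
`(x³, y³, z³, c, d)`. -/
noncomputable def M' : Matrix (Fin 2) (Fin 5) (MvPolynomial (Fin 7) K) :=
  !![x K ^ 2 + w K, y K ^ 2 + u K, z K ^ 2 + (a K * d K - b K * c K), a K, b K;
     x K ^ 3, y K ^ 3, z K ^ 3, c K, d K]

/-- The `2 × 2` minor of `X'` on columns `i, j`. -/
noncomputable def minor (i j : Fin 5) : MvPolynomial (Fin 7) K :=
  M' K 0 i * M' K 1 j - M' K 0 j * M' K 1 i

/-- Pointwise key lemma: if the four chosen (sums of) minors of the modified matrix vanish
at a point, then all ten of its `2 × 2` minors vanish there. -/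
private lemma key {K : Type*} [Field K] (X Y Z A B C D P1 P2 P3 : K)
    (hP3 : P3 = Z^2 + (A*D - B*C))
    (hP2 : P2 = Y^2 + (P3*D - Z^3*B))
    (hP1 : P1 = X^2 + ((P2*D - Y^3*B) + (P3*C - Z^3*A)))
    (h1 : P1*Y^3 - P2*X^3 = 0)
    (h2 : P1*Z^3 - P3*X^3 = 0)
    (h3 : (P1*C - A*X^3) + (P2*Z^3 - P3*Y^3) = 0)
    (h4 : (P1*D - B*X^3) + (P2*C - A*Y^3) = 0) :
    P1*C - A*X^3 = 0 ∧ P1*D - B*X^3 = 0 ∧ P2*Z^3 - P3*Y^3 = 0 ∧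
    P2*C - A*Y^3 = 0 ∧ P2*D - B*Y^3 = 0 ∧ P3*C - A*Z^3 = 0 ∧
    P3*D - B*Z^3 = 0 ∧ A*D - B*C = 0 := by
  have hcan : ∀ (s t : K), s ≠ 0 → s * t = 0 → t = 0 := fun s t hs h =>
    (mul_eq_zero.mp h).resolve_left hs
  have hm14 : P1*C - A*X^3 = 0 := by
    have h : (P1*C - A*X^3)^2 = 0 := by
      linear_combination (P1*C - A*X^3)*h3 - (P2*C - A*Y^3)*h2 + (P3*C - A*Z^3)*h1
    exact sq_eq_zero_iff.mp h
  have hm23 : P2*Z^3 - P3*Y^3 = 0 := by linear_combination h3 - hm14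
  have hm15 : P1*D - B*X^3 = 0 := by
    have h : (P1*D - B*X^3)^2 = 0 := by
      linear_combination (P1*D - B*X^3)*h4 - (P2*D - B*Y^3)*hm14 + (A*D - B*C)*h1
    exact sq_eq_zero_iff.mp h
  have hm24 : P2*C - A*Y^3 = 0 := by linear_combination h4 - hm15
  have h2534 : (P2*D - B*Y^3)*(P3*C - A*Z^3) = 0 := by
    linear_combination (P3*D - B*Z^3)*hm24 - (A*D - B*C)*hm23
  by_cases hX : X = 0
  · by_cases hP1z : P1 = 0
    · have h7 : (P2*D - B*Y^3) + (P3*C - A*Z^3) = 0 := by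
        linear_combination hP1z - hP1 - X*hX
      have hm25 : P2*D - B*Y^3 = 0 := by
        have h : (P2*D - B*Y^3)^2 = 0 := by
          linear_combination (P2*D - B*Y^3)*h7 - h2534
        exact sq_eq_zero_iff.mp h
      have hm34 : P3*C - A*Z^3 = 0 := by linear_combination h7 - hm25
      by_cases hY : Y = 0
      · by_cases hP2z : P2 = 0
        · have hm35 : P3*D - B*Z^3 = 0 := by linear_combination hP2z - hP2 - Y*hY
          by_cases hZ : Z = 0
          · by_cases hP3z : P3 = 0
            · have hm45 : A*D - B*C = 0 := by linear_combination hP3z - hP3 - Z*hZ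
              exact ⟨hm14, hm15, hm23, hm24, hm25, hm34, hm35, hm45⟩
            · have hC : C = 0 := hcan P3 C hP3z (by linear_combination hm34 + A*Z^2*hZ)
              have hD : D = 0 := hcan P3 D hP3z (by linear_combination hm35 + B*Z^2*hZ)
              have hm45 : A*D - B*C = 0 := by linear_combination A*hD - B*hC
              exact ⟨hm14, hm15, hm23, hm24, hm25, hm34, hm35, hm45⟩
          · have hm45 : A*D - B*C = 0 :=
              hcan (Z^3) _ (pow_ne_zero 3 hZ) (by linear_combination C*hm35 - D*hm34)
            exact ⟨hm14, hm15, hm23, hm24, hm25, hm34, hm35, hm45⟩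
        · have hZ3 : Z^3 = 0 := hcan P2 _ hP2z (by linear_combination hm23 + P3*Y^2*hY)
          have hC : C = 0 := hcan P2 C hP2z (by linear_combination hm24 + A*Y^2*hY)
          have hD : D = 0 := hcan P2 D hP2z (by linear_combination hm25 + B*Y^2*hY)
          have hm35 : P3*D - B*Z^3 = 0 := by linear_combination P3*hD - B*hZ3
          have hm45 : A*D - B*C = 0 := by linear_combination A*hD - B*hC
          exact ⟨hm14, hm15, hm23, hm24, hm25, hm34, hm35, hm45⟩
      · have hm35 : P3*D - B*Z^3 = 0 :=
          hcan (Y^3) _ (pow_ne_zero 3 hY) (by linear_combination Z^3*hm25 - D*hm23)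
        have hm45 : A*D - B*C = 0 :=
          hcan (Y^3) _ (pow_ne_zero 3 hY) (by linear_combination C*hm25 - D*hm24)
        exact ⟨hm14, hm15, hm23, hm24, hm25, hm34, hm35, hm45⟩
    · have hY3 : Y^3 = 0 := hcan P1 _ hP1z (by linear_combination h1 + P2*X^2*hX)
      have hZ3 : Z^3 = 0 := hcan P1 _ hP1z (by linear_combination h2 + P3*X^2*hX)
      have hC : C = 0 := hcan P1 C hP1z (by linear_combination hm14 + A*X^2*hX)
      have hD : D = 0 := hcan P1 D hP1z (by linear_combination hm15 + B*X^2*hX)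
      have hm25 : P2*D - B*Y^3 = 0 := by linear_combination P2*hD - B*hY3
      have hm34 : P3*C - A*Z^3 = 0 := by linear_combination P3*hC - A*hZ3
      have hm35 : P3*D - B*Z^3 = 0 := by linear_combination P3*hD - B*hZ3
      have hm45 : A*D - B*C = 0 := by linear_combination A*hD - B*hC
      exact ⟨hm14, hm15, hm23, hm24, hm25, hm34, hm35, hm45⟩
  · have hX3 : X^3 ≠ 0 := pow_ne_zero 3 hX
    have hm25 : P2*D - B*Y^3 = 0 :=
      hcan (X^3) _ hX3 (by linear_combination Y^3*hm15 - D*h1)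
    have hm34 : P3*C - A*Z^3 = 0 :=
      hcan (X^3) _ hX3 (by linear_combination Z^3*hm14 - C*h2)
    have hm35 : P3*D - B*Z^3 = 0 :=
      hcan (X^3) _ hX3 (by linear_combination Z^3*hm15 - D*h2)
    have hm45 : A*D - B*C = 0 :=
      hcan (X^3) _ hX3 (by linear_combination C*hm15 - D*hm14)
    exact ⟨hm14, hm15, hm23, hm24, hm25, hm34, hm35, hm45⟩

set_option maxHeartbeats 2000000

/-- `√(I₂(X)) = √((g₁, g₂, g₃, g₄))`, where `g₁ = [12|12]`, `g₂ = [12|13]`,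
`g₃ = [12|14] + [12|23]` and `g₄ = [12|15] + [12|24]` are (sums of) minors of `X'`. -/
theorem stmt15 [IsAlgClosed K] :
    (minorsIdeal 2 (M K)).radical =
      (Ideal.span {minor K 0 1, minor K 0 2,
        minor K 0 3 + minor K 1 2,
        minor K 0 4 + minor K 1 3} : Ideal (MvPolynomial (Fin 7) K)).radical := by
  rw [← MvPolynomial.vanishingIdeal_zeroLocus_eq_radical (K := K),
    ← MvPolynomial.vanishingIdeal_zeroLocus_eq_radical (K := K)]
  congr 1
  unfold minorsIdeal
  rw [MvPolynomial.zeroLocus_span, MvPolynomial.zeroLocus_span]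
  ext v
  simp only [Set.mem_setOf_eq, MvPolynomial.coe_aeval_eq_eval]
  constructor
  · -- minors of X vanish at v ⟹ the four g's vanish at v
    intro hmin
    have get : ∀ (i j : Fin 5), Function.Injective ![i, j] →
        MvPolynomial.eval v (((M K).submatrix id ![i, j]).det) = 0 := fun i j hij =>
      hmin _ ⟨id, ![i, j], Function.injective_id, hij, rfl⟩
    have e12 := get 0 1 (by decide)
    have e13 := get 0 2 (by decide)
    have e14 := get 0 3 (by decide)
    have e15 := get 0 4 (by decide)
    have e23 := get 1 2 (by decide)
    have e24 := get 1 3 (by decide)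
    have e25 := get 1 4 (by decide)
    have e34 := get 2 3 (by decide)
    have e35 := get 2 4 (by decide)
    have e45 := get 3 4 (by decide)
    simp [Matrix.det_fin_two, M, x, y, z, a, b, c, d]
      at e12 e13 e14 e15 e23 e24 e25 e34 e35 e45
    intro p hp
    simp only [Set.mem_insert_iff, Set.mem_singleton_iff] at hp
    obtain rfl | rfl | rfl | rfl := hp <;>
      simp [minor, M', w, u, x, y, z, a, b, c, d]
    · linear_combination e12 + (v 1)^3 * (e25 + e34 + (v 6)*e35 + ((v 6)^2 + (v 5))*e45)
        - (v 0)^3*(e35 + (v 6)*e45)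
    · linear_combination e13 + (v 2)^3 * (e25 + e34 + (v 6)*e35 + ((v 6)^2 + (v 5))*e45)
        - (v 0)^3*e45
    · linear_combination e14 + (v 5) * (e25 + e34 + (v 6)*e35 + ((v 6)^2 + (v 5))*e45)
        + e23 + (v 2)^3*(e35 + (v 6)*e45) - (v 1)^3*e45
    · linear_combination e15 + (v 6) * (e25 + e34 + (v 6)*e35 + ((v 6)^2 + (v 5))*e45)
        + e24 + (v 5)*(e35 + (v 6)*e45)
  · -- the four g's vanish at v ⟹ all minors of X vanish at v
    intro hg
    have hg1 := hg (minor K 0 1) (by simp)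
    have hg2 := hg (minor K 0 2) (by simp)
    have hg3 := hg (minor K 0 3 + minor K 1 2) (by simp)
    have hg4 := hg (minor K 0 4 + minor K 1 3) (by simp)
    simp [minor, M', w, u, x, y, z, a, b, c, d] at hg1 hg2 hg3 hg4
    obtain ⟨hm14, hm15, hm23, hm24, hm25, hm34, hm35, hm45⟩ :=
      key (v 0) (v 1) (v 2) (v 3) (v 4) (v 5) (v 6) _ _ _ rfl rfl rfl
        (by linear_combination hg1) (by linear_combination hg2)
        (by linear_combination hg3) (by linear_combination hg4)
    -- minors of X at v
    have e12 : (v 0)^2*(v 1)^3 - (v 1)^2*(v 0)^3 = 0 := by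
      linear_combination hg1 - (v 1)^3*(hm25 + hm34) + (v 0)^3*hm35
    have e13 : (v 0)^2*(v 2)^3 - (v 2)^2*(v 0)^3 = 0 := by
      linear_combination hg2 - (v 2)^3*(hm25 + hm34) + (v 0)^3*hm45
    have e14 : (v 0)^2*(v 5) - (v 3)*(v 0)^3 = 0 := by
      linear_combination hm14 - (v 5)*(hm25 + hm34)
    have e15 : (v 0)^2*(v 6) - (v 4)*(v 0)^3 = 0 := by
      linear_combination hm15 - (v 6)*(hm25 + hm34)
    have e23 : (v 1)^2*(v 2)^3 - (v 2)^2*(v 1)^3 = 0 := by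
      linear_combination hm23 - (v 2)^3*hm35 + (v 1)^3*hm45
    have e24 : (v 1)^2*(v 5) - (v 3)*(v 1)^3 = 0 := by
      linear_combination hm24 - (v 5)*hm35
    have e25 : (v 1)^2*(v 6) - (v 4)*(v 1)^3 = 0 := by
      linear_combination hm25 - (v 6)*hm35
    have e34 : (v 2)^2*(v 5) - (v 3)*(v 2)^3 = 0 := by
      linear_combination hm34 - (v 5)*hm45
    have e35 : (v 2)^2*(v 6) - (v 4)*(v 2)^3 = 0 := by
      linear_combination hm35 - (v 6)*hm45
    have e45 : (v 3)*(v 6) - (v 4)*(v 5) = 0 := by linear_combination hm45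
    have hAll : ∀ i j : Fin 5, MvPolynomial.eval v (M K 0 i) * MvPolynomial.eval v (M K 1 j)
        - MvPolynomial.eval v (M K 0 j) * MvPolynomial.eval v (M K 1 i) = 0 := by
      intro i j
      fin_cases i <;> fin_cases j <;> simp [M, x, y, z, a, b, c, d]
      · linear_combination e12
      · linear_combination e13
      · linear_combination e14
      · linear_combination e15
      · linear_combination -e12
      · linear_combination e23
      · linear_combination e24
      · linear_combination e25
      · linear_combination -e13
      · linear_combination -e23
      · linear_combination e34
      · linear_combination e35
      · linear_combination -e14
      · linear_combination -e24
      · linear_combination -e34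
      · linear_combination e45
      · linear_combination -e15
      · linear_combination -e25
      · linear_combination -e35
      · linear_combination -e45
    rintro p ⟨r, c, hr, -, rfl⟩
    rw [Matrix.det_fin_two]
    simp only [Matrix.submatrix_apply, map_sub, map_mul, MvPolynomial.coe_aeval_eq_eval]
    have h2cases : ∀ i : Fin 2, i = 0 ∨ i = 1 := by decide
    rcases h2cases (r 0) with h0 | h0 <;> rcases h2cases (r 1) with h1 | h1
    · exact absurd (hr (h0.trans h1.symm)) (by decide)
    · rw [h0, h1]; exact hAll (c 0) (c 1)
    · rw [h0, h1]
      change MvPolynomial.eval v _ * MvPolynomial.eval v _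
        - MvPolynomial.eval v _ * MvPolynomial.eval v _ = 0
      linear_combination -(hAll (c 0) (c 1))
    · exact absurd (hr (h0.trans h1.symm)) (by decide)

end Stmt15
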